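/- If T is a tree (or forest), then det(L(T,X)) = Σ_{μ ∈ M(T)} (−1)^{|μ|} ∏_{v ∉ V(μ)} x_v, where M(T) is the set of all matchings of T (including the empty matching) and V(μ) is the set of vertices covered by μ. -/

import Mathlib

open MvPolynomial Matrix

open scoped Classical

namespace DetGlapAux

variable {n : ℕ}

/-- The matching condition from the theorem statement. -/
def Match (G : SimpleGraph (Fin n)) (μ : Finset (Sym2 (Fin n))) : Prop :=
  (∀ e ∈ μ, e ∈ G.edgeSet) ∧
    ∀ e ∈ μ, ∀ f ∈ μ, e ≠ f → ∀ v : Fin n, ¬(v ∈ e ∧ v ∈ f)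

/-- Good permutations: involutions moving only along edges. -/
def Good (G : SimpleGraph (Fin n)) (σ : Equiv.Perm (Fin n)) : Prop :=
  σ * σ = 1 ∧ ∀ v, σ v ≠ v → G.Adj v (σ v)

noncomputable def toMatching (σ : Equiv.Perm (Fin n)) : Finset (Sym2 (Fin n)) :=
  σ.support.image fun v => s(v, σ v)

lemma good_invol {G : SimpleGraph (Fin n)} {σ : Equiv.Perm (Fin n)} (h : Good G σ)
    (v : Fin n) : σ (σ v) = v := by
  have := congrArg (fun τ : Equiv.Perm (Fin n) => τ v) h.1
  simpa using this

/-- In a forest, a permutation all of whose moved points move along edges is an involution. -/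
lemma invol_of_acyclic {G : SimpleGraph (Fin n)} (hG : G.IsAcyclic) (σ : Equiv.Perm (Fin n))
    (hadj : ∀ v, σ v ≠ v → G.Adj v (σ v)) : σ * σ = 1 := by
  by_contra h
  obtain ⟨v, hv⟩ : ∃ v, σ (σ v) ≠ v := by
    by_contra h'
    push_neg at h'
    exact h (Equiv.ext fun v => h' v)
  have hσv : σ v ≠ v := fun hh => hv (by rw [hh, hh])
  have key : ∀ i : ℕ, (σ ^ (i + 1)) v = σ ((σ ^ i) v) := fun i => by
    rw [pow_succ', Equiv.Perm.mul_apply]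
  -- minimal period of v
  have hex : ∃ m, 0 < m ∧ (σ ^ m) v = v := by
    refine ⟨orderOf σ, orderOf_pos σ, ?_⟩
    rw [pow_orderOf_eq_one]; rfl
  classical
  let k := Nat.find hex
  have hk : 0 < k ∧ (σ ^ k) v = v := Nat.find_spec hex
  have hmin : ∀ m, m < k → ¬(0 < m ∧ (σ ^ m) v = v) := fun m hm => Nat.find_min hex hm
  have hk1 : k ≠ 1 := by
    intro h1
    have := hk.2; rw [h1, pow_one] at this; exact hσv this
  have hk2 : k ≠ 2 := by
    intro h2
    have := hk.2
    rw [h2, show (2:ℕ) = 1 + 1 from rfl, key 1, pow_one] at this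
    exact hv this
  have hk3 : 3 ≤ k := by omega
  -- each iterate is moved
  have hmove : ∀ i : ℕ, σ ((σ ^ i) v) ≠ (σ ^ i) v := by
    intro i hh
    have : (σ ^ i) (σ v) = (σ ^ i) v := by
      rw [← Equiv.Perm.mul_apply, ← pow_succ, key i, hh]
    exact hσv ((σ ^ i).injective this)
  -- reachability in the edge-deleted graph
  set G' := G \ SimpleGraph.fromEdgeSet {s(v, σ v)} with hG'
  have hadj' : ∀ i : ℕ, 1 ≤ i → i + 1 ≤ k →
      G'.Adj ((σ ^ i) v) ((σ ^ (i + 1)) v) := by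
    intro i hi1 hik
    have hAdj : G.Adj ((σ ^ i) v) ((σ ^ (i + 1)) v) := by
      rw [key i]; exact hadj _ (hmove i)
    have hne : s((σ ^ i) v, (σ ^ (i + 1)) v) ≠ s(v, σ v) := by
      intro he
      rcases Sym2.eq_iff.mp he with ⟨h1, h2⟩ | ⟨h1, h2⟩
      · exact hmin i (by omega) ⟨by omega, h1⟩
      · -- (σ^(i+1)) v = v
        rcases lt_or_eq_of_le hik with hlt | heq
        · exact hmin (i + 1) hlt ⟨by omega, h2⟩
        · -- i+1 = k, and (σ^i) v = σ v, so (σ^(i-1)) v = v with 1 ≤ i-1 < k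
          have h1' : σ ((σ ^ (i - 1)) v) = σ v := by
            rw [← key (i - 1), show i - 1 + 1 = i from by omega]; exact h1
          exact hmin (i - 1) (by omega) ⟨by omega, σ.injective h1'⟩
    simp only [hG', SimpleGraph.sdiff_adj, SimpleGraph.fromEdgeSet_adj]
    exact ⟨hAdj, fun hc => hne hc.1⟩
  have hreach : ∀ i : ℕ, 1 ≤ i → i ≤ k → G'.Reachable (σ v) ((σ ^ i) v) := by
    intro i
    induction i with
    | zero => omega
    | succ m ih =>
      intro _ hmk
      rcases Nat.eq_or_lt_of_le (show 1 ≤ m + 1 from by omega) with h1 | h1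
      · have : (σ ^ (m + 1)) v = σ v := by rw [← h1, pow_one]
        rw [this]
      · have hm1 : 1 ≤ m := by omega
        exact (ih hm1 (by omega)).trans (hadj' m hm1 hmk).reachable
  have hbridge := (SimpleGraph.isAcyclic_iff_forall_adj_isBridge.mp hG) (hadj v hσv)
  rw [SimpleGraph.isBridge_iff] at hbridge
  have : G'.Reachable (σ v) v := by
    have := hreach k (by omega) le_rfl
    rwa [hk.2] at this
  exact hbridge this.symm


noncomputable def backFun (μ : Finset (Sym2 (Fin n))) (v : Fin n) : Fin n :=
  if h : ∃ w, w ≠ v ∧ s(v, w) ∈ μ then h.choose else v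

lemma backFun_spec {μ : Finset (Sym2 (Fin n))} {v : Fin n} (h : backFun μ v ≠ v) :
    backFun μ v ≠ v ∧ s(v, backFun μ v) ∈ μ := by
  by_cases hh : ∃ w, w ≠ v ∧ s(v, w) ∈ μ
  · have hs := hh.choose_spec
    rw [backFun, dif_pos hh]
    exact ⟨hs.1, hs.2⟩
  · exact absurd (by rw [backFun, dif_neg hh]) h

lemma backFun_eq {G : SimpleGraph (Fin n)} {μ : Finset (Sym2 (Fin n))} (hμ : Match G μ)
    {v w : Fin n} (hw : w ≠ v) (hm : s(v, w) ∈ μ) : backFun μ v = w := by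
  have hh : ∃ w, w ≠ v ∧ s(v, w) ∈ μ := ⟨w, hw, hm⟩
  rw [backFun, dif_pos hh]
  have hs := hh.choose_spec
  by_contra hne
  have hef : s(v, hh.choose) ≠ s(v, w) := fun hc => hne (Sym2.congr_right.mp hc)
  exact hμ.2 _ hs.2 _ hm hef v ⟨Sym2.mem_mk_left _ _, Sym2.mem_mk_left _ _⟩

lemma backFun_invol {G : SimpleGraph (Fin n)} {μ : Finset (Sym2 (Fin n))} (hμ : Match G μ) :
    Function.Involutive (backFun μ) := by
  intro v
  by_cases h : backFun μ v = v
  · rw [h, h]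
  · obtain ⟨hne, hmem⟩ := backFun_spec h
    have : s(backFun μ v, v) ∈ μ := by rwa [Sym2.eq_swap] at hmem
    exact backFun_eq hμ (Ne.symm hne) this

noncomputable def backPerm {G : SimpleGraph (Fin n)} {μ : Finset (Sym2 (Fin n))}
    (hμ : Match G μ) : Equiv.Perm (Fin n) :=
  Function.Involutive.toPerm _ (backFun_invol hμ)

lemma backPerm_good {G : SimpleGraph (Fin n)} {μ : Finset (Sym2 (Fin n))} (hμ : Match G μ) :
    Good G (backPerm hμ) := by
  refine ⟨Equiv.ext fun v => ?_, fun v hv => ?_⟩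
  · simp only [Equiv.Perm.mul_apply, Equiv.Perm.one_apply]
    exact backFun_invol hμ v
  · obtain ⟨_, hmem⟩ := backFun_spec (μ := μ) (v := v) hv
    exact (G.mem_edgeSet).mp (hμ.1 _ hmem)

lemma backPerm_toMatching {G : SimpleGraph (Fin n)} {μ : Finset (Sym2 (Fin n))}
    (hμ : Match G μ) : toMatching (backPerm hμ) = μ := by
  ext e
  simp only [toMatching, Finset.mem_image, Equiv.Perm.mem_support]
  constructor
  · rintro ⟨v, hv, rfl⟩
    exact (backFun_spec hv).2
  · intro he
    induction e using Sym2.ind with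
    | _ a b =>
      have hab : a ≠ b := by
        intro hh
        exact SimpleGraph.not_isDiag_of_mem_edgeSet G (hμ.1 _ he) (by rw [hh]; exact rfl)
      have hfa : backFun μ a = b := backFun_eq hμ (Ne.symm hab) he
      exact ⟨a, by rw [show (backPerm hμ) a = backFun μ a from rfl, hfa]; exact Ne.symm hab,
        by rw [show (backPerm hμ) a = backFun μ a from rfl, hfa]⟩


lemma mem_toMatching_iff {G : SimpleGraph (Fin n)} {σ : Equiv.Perm (Fin n)} (hσ : Good G σ)
    {e : Sym2 (Fin n)} : e ∈ toMatching σ ↔ ∃ v, σ v ≠ v ∧ e = s(v, σ v) := by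
  simp only [toMatching, Finset.mem_image, Equiv.Perm.mem_support]
  constructor
  · rintro ⟨v, hv, rfl⟩; exact ⟨v, hv, rfl⟩
  · rintro ⟨v, hv, rfl⟩; exact ⟨v, hv, rfl⟩

lemma edge_eq_of_mem {G : SimpleGraph (Fin n)} {σ : Equiv.Perm (Fin n)} (hσ : Good G σ)
    {e : Sym2 (Fin n)} (he : e ∈ toMatching σ) {v : Fin n} (hv : v ∈ e) :
    σ v ≠ v ∧ e = s(v, σ v) := by
  obtain ⟨u, hu, rfl⟩ := (mem_toMatching_iff hσ).mp he
  rcases Sym2.mem_iff.mp hv with rfl | rfl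
  · exact ⟨hu, rfl⟩
  · refine ⟨?_, ?_⟩
    · rw [good_invol hσ u]; exact Ne.symm hu
    · rw [good_invol hσ u, Sym2.eq_swap]

lemma toMatching_match {G : SimpleGraph (Fin n)} {σ : Equiv.Perm (Fin n)} (hσ : Good G σ) :
    Match G (toMatching σ) := by
  constructor
  · intro e he
    obtain ⟨v, hv, rfl⟩ := (mem_toMatching_iff hσ).mp he
    exact (G.mem_edgeSet).mpr (hσ.2 v hv)
  · rintro e he f hf hef v ⟨hve, hvf⟩
    have h1 := (edge_eq_of_mem hσ he hve).2
    have h2 := (edge_eq_of_mem hσ hf hvf).2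
    exact hef (h1.trans h2.symm)

lemma toMatching_backPerm {G : SimpleGraph (Fin n)} {σ : Equiv.Perm (Fin n)} (hσ : Good G σ) :
    backPerm (toMatching_match hσ) = σ := by
  apply Equiv.ext
  intro v
  show backFun (toMatching σ) v = σ v
  by_cases hv : σ v = v
  · rw [backFun, dif_neg, hv]
    rintro ⟨w, hwv, hw⟩
    obtain ⟨hmv, heq⟩ := edge_eq_of_mem hσ hw (Sym2.mem_mk_left _ _)
    exact hmv (by rw [hv])
  · exact backFun_eq (toMatching_match hσ) hv
      ((mem_toMatching_iff hσ).mpr ⟨v, hv, rfl⟩)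

lemma covered_iff_support {G : SimpleGraph (Fin n)} {σ : Equiv.Perm (Fin n)} (hσ : Good G σ)
    {v : Fin n} : (∃ e ∈ toMatching σ, v ∈ e) ↔ σ v ≠ v := by
  constructor
  · rintro ⟨e, he, hv⟩
    exact (edge_eq_of_mem hσ he hv).1
  · intro hv
    exact ⟨s(v, σ v), (mem_toMatching_iff hσ).mpr ⟨v, hv, rfl⟩, Sym2.mem_mk_left _ _⟩

lemma support_card_eq {G : SimpleGraph (Fin n)} {σ : Equiv.Perm (Fin n)} (hσ : Good G σ) :
    σ.support.card = 2 * (toMatching σ).card := by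
  rw [Finset.card_eq_sum_card_image (fun v => s(v, σ v)) σ.support]
  rw [show (toMatching σ).card = ∑ _e ∈ toMatching σ, 1 from by simp, Finset.mul_sum]
  refine Finset.sum_congr rfl ?_
  intro e he
  obtain ⟨u, hu, rfl⟩ := (mem_toMatching_iff hσ).mp he
  have : (σ.support.filter fun v => s(v, σ v) = s(u, σ u)) = {u, σ u} := by
    ext v
    simp only [Finset.mem_filter, Equiv.Perm.mem_support, Finset.mem_insert,
      Finset.mem_singleton]
    constructor
    · rintro ⟨hv, heq⟩
      rcases Sym2.eq_iff.mp heq with ⟨rfl, -⟩ | ⟨rfl, -⟩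
      · exact Or.inl rfl
      · exact Or.inr rfl
    · rintro (rfl | rfl)
      · exact ⟨hu, rfl⟩
      · refine ⟨?_, ?_⟩
        · rw [good_invol hσ u]; exact Ne.symm hu
        · rw [good_invol hσ u, Sym2.eq_swap]
  rw [this, Finset.card_insert_of_notMem (by simpa using Ne.symm hu), Finset.card_singleton]
  norm_num

lemma sign_good {G : SimpleGraph (Fin n)} {σ : Equiv.Perm (Fin n)} (hσ : Good G σ) :
    Equiv.Perm.sign σ = (-1 : ℤˣ) ^ (toMatching σ).card := by
  have hord : orderOf σ ∣ 2 := orderOf_dvd_of_pow_eq_one (by rw [pow_two]; exact hσ.1)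
  have hct : σ.cycleType = Multiset.replicate (Multiset.card σ.cycleType) 2 := by
    apply Multiset.eq_replicate_of_mem
    intro a ha
    have h2 := Equiv.Perm.two_le_of_mem_cycleType ha
    have hd := (Equiv.Perm.dvd_of_mem_cycleType ha).trans hord
    have hle : a ≤ 2 := Nat.le_of_dvd (by norm_num) hd
    omega
  have hsum : σ.cycleType.sum = 2 * Multiset.card σ.cycleType := by
    rw [hct]
    simp [Multiset.sum_replicate, mul_comm]
  have hcard : Multiset.card σ.cycleType = (toMatching σ).card := by
    have := Equiv.Perm.sum_cycleType σ
    rw [hsum, support_card_eq hσ] at this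
    omega
  rw [Equiv.Perm.sign_of_cycleType, hsum, hcard]
  rw [show 2 * (toMatching σ).card + (toMatching σ).card = 2 * (toMatching σ).card
    + (toMatching σ).card from rfl]
  rw [pow_add, pow_mul]
  simp

end DetGlapAux

open DetGlapAux

open scoped Classical in
/-- If `T` is a forest (acyclic simple graph), then
`det L(T,X) = Σ_{μ matching of T} (−1)^{|μ|} ∏_{v ∉ V(μ)} x_v`, where the sum runs over all
matchings of `T` (including the empty one) and `V(μ)` is the set of covered vertices. -/
theorem det_glap_forest_matchings (P : Type) [CommRing P] (n : ℕ)
    (G : SimpleGraph (Fin n)) (hG : G.IsAcyclic) :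
    let L : Matrix (Fin n) (Fin n) (MvPolynomial (Fin n) P) :=
      Matrix.of fun u v => if u = v then X u
        else if G.Adj u v then (-1 : MvPolynomial (Fin n) P) else 0
    L.det = ∑ μ ∈ Finset.univ.filter (fun μ : Finset (Sym2 (Fin n)) =>
        (∀ e ∈ μ, e ∈ G.edgeSet) ∧
        ∀ e ∈ μ, ∀ f ∈ μ, e ≠ f → ∀ v : Fin n, ¬(v ∈ e ∧ v ∈ f)),
      (-1 : MvPolynomial (Fin n) P) ^ μ.card
        * ∏ v ∈ Finset.univ.filter (fun v : Fin n => ∀ e ∈ μ, v ∉ e), X v := by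
  intro L
  have hLdiag : ∀ i : Fin n, L i i = X i := fun i => by simp [L]
  have hLoff : ∀ i j : Fin n, i ≠ j → G.Adj i j → L i j = -1 := fun i j hij ha => by
    simp [L, hij, ha]
  have hLzero : ∀ i j : Fin n, i ≠ j → ¬G.Adj i j → L i j = 0 := fun i j hij ha => by
    simp [L, hij, ha]
  rw [Matrix.det_apply']
  rw [← Finset.sum_filter_of_ne (p := fun σ => Good G σ)
    (fun σ _ hne => by
      by_contra hbad
      apply hne
      have hadj : ∃ v, σ v ≠ v ∧ ¬G.Adj v (σ v) := by
        by_contra hc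
        push_neg at hc
        exact hbad ⟨invol_of_acyclic hG σ hc, hc⟩
      obtain ⟨v, hv, hna⟩ := hadj
      have : L (σ v) v = 0 := hLzero _ _ hv (fun h => hna h.symm)
      rw [Finset.prod_eq_zero (f := fun i => L (σ i) i) (Finset.mem_univ v) this, mul_zero])]
  refine Finset.sum_bij' (fun σ _ => toMatching σ)
    (fun μ hμ => backPerm (G := G) (Finset.mem_filter.mp hμ).2) ?_ ?_ ?_ ?_ ?_
  · intro σ hσ
    have hm := toMatching_match (Finset.mem_filter.mp hσ).2
    exact Finset.mem_filter.mpr ⟨Finset.mem_univ _, hm⟩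
  · intro μ hμ
    exact Finset.mem_filter.mpr ⟨Finset.mem_univ _,
      backPerm_good (Finset.mem_filter.mp hμ).2⟩
  · intro σ hσ
    have hσg : Good G σ := (Finset.mem_filter.mp hσ).2
    exact toMatching_backPerm hσg
  · intro μ hμ
    exact backPerm_toMatching (Finset.mem_filter.mp hμ).2
  · intro σ hσ
    have hσg : Good G σ := (Finset.mem_filter.mp hσ).2
    set μ := toMatching σ with hμdef
    have hsupp : σ.supportᶜ = Finset.univ.filter (fun v : Fin n => ∀ e ∈ μ, v ∉ e) := by
      ext v
      simp only [Finset.mem_compl, Equiv.Perm.mem_support, not_not, Finset.mem_filter,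
        Finset.mem_univ, true_and]
      constructor
      · intro hv e he hve
        exact (covered_iff_support hσg).mp ⟨e, he, hve⟩ hv
      · intro hv
        by_contra hne
        obtain ⟨e, he, hve⟩ := (covered_iff_support hσg).mpr hne
        exact hv e he hve
    have hprod : (∏ i, L (σ i) i) =
        (-1 : MvPolynomial (Fin n) P) ^ σ.support.card
          * ∏ v ∈ Finset.univ.filter (fun v : Fin n => ∀ e ∈ μ, v ∉ e), X v := by
      rw [← Finset.prod_mul_prod_compl σ.support (fun i => L (σ i) i), hsupp]
      congr 1
      · rw [Finset.prod_congr rfl (fun i hi => ?_), Finset.prod_const]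
        have hi' : σ i ≠ i := Equiv.Perm.mem_support.mp hi
        exact hLoff _ _ hi' ((hσg.2 i hi').symm)
      · refine Finset.prod_congr rfl (fun v hv => ?_)
        rw [← hsupp] at hv
        have : σ v = v := by simpa using Finset.mem_compl.mp hv
        rw [this, hLdiag]
    have hsign : ((Equiv.Perm.sign σ : ℤ) : MvPolynomial (Fin n) P) =
        (-1 : MvPolynomial (Fin n) P) ^ μ.card := by
      rw [sign_good hσg]
      push_cast
      rfl
    rw [hprod, hsign, support_card_eq hσg, pow_mul]
    ring
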